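/- For every τ in the upper half-plane ℍ, η(2τ)⁹ / (η(τ)³ · η(4τ)³) = ∑_{n=0}^∞ (-2/n) · n · exp(2πi n² τ / 8), where (-2/n) is the Kronecker symbol. -/

import Mathlib

open Complex

open Finset Filter Topology


lemma two_mul_choose_two (n : ℕ) : 2 * n.choose 2 = n * (n - 1) := by
  induction n with
  | zero => rfl
  | succ n ih =>
    rw [Nat.choose_succ_succ, Nat.choose_one_right, Nat.mul_add, ih]
    cases n with
    | zero => simp
    | succ m => simp [Nat.succ_sub_one]; ring

lemma prod_one_add_le_exp {ι : Type*} (s : Finset ι) (a : ι → ℝ) (ha : ∀ i, 0 ≤ a i) :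
    ∏ i ∈ s, (1 + a i) ≤ Real.exp (∑ i ∈ s, a i) := by
  rw [Real.exp_sum]
  refine Finset.prod_le_prod (fun i _ => by have := ha i; linarith) (fun i _ => ?_)
  have := Real.add_one_le_exp (a i); linarith

lemma exp_le_prod_one_sub {ι : Type*} (s : Finset ι) (a : ι → ℝ) {κ : ℝ} (hκ : κ < 1)
    (ha : ∀ i, 0 ≤ a i) (hb : ∀ i, a i ≤ κ) :
    Real.exp (-(1 - κ)⁻¹ * ∑ i ∈ s, a i) ≤ ∏ i ∈ s, (1 - a i) := by
  have hκ0 : (0:ℝ) < 1 - κ := by linarith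
  have key : ∀ i : ι, Real.exp (-(1 - κ)⁻¹ * a i) ≤ 1 - a i := by
    intro i
    have hai : a i < 1 := lt_of_le_of_lt (hb i) hκ
    have h1 : (0:ℝ) < 1 - a i := by linarith
    have h2 : 1 + (1 - κ)⁻¹ * a i ≤ Real.exp ((1 - κ)⁻¹ * a i) := by
      have := Real.add_one_le_exp ((1 - κ)⁻¹ * a i); linarith
    have h6 : 1 ≤ (1 - κ)⁻¹ * (1 - a i) := by
      rw [le_inv_mul_iff₀ hκ0]; linarith [hb i]
    have h7 : 1 ≤ (1 + (1 - κ)⁻¹ * a i) * (1 - a i) := by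
      have h8 : a i * 1 ≤ a i * ((1 - κ)⁻¹ * (1 - a i)) :=
        mul_le_mul_of_nonneg_left h6 (ha i)
      nlinarith [h8]
    have h11 : 1 ≤ Real.exp ((1 - κ)⁻¹ * a i) * (1 - a i) :=
      le_trans h7 (mul_le_mul_of_nonneg_right h2 h1.le)
    have hmul : Real.exp (-((1 - κ)⁻¹ * a i)) * Real.exp ((1 - κ)⁻¹ * a i) = 1 := by
      rw [← Real.exp_add]; simp
    calc Real.exp (-(1 - κ)⁻¹ * a i) = Real.exp (-((1 - κ)⁻¹ * a i)) * 1 := by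
          rw [mul_one, neg_mul]
      _ ≤ Real.exp (-((1 - κ)⁻¹ * a i)) * (Real.exp ((1 - κ)⁻¹ * a i) * (1 - a i)) :=
          mul_le_mul_of_nonneg_left h11 (Real.exp_pos _).le
      _ = (Real.exp (-((1 - κ)⁻¹ * a i)) * Real.exp ((1 - κ)⁻¹ * a i)) * (1 - a i) := by ring
      _ = 1 - a i := by rw [hmul, one_mul]
  calc Real.exp (-(1 - κ)⁻¹ * ∑ i ∈ s, a i) = ∏ i ∈ s, Real.exp (-(1-κ)⁻¹ * a i) := by
        rw [← Real.exp_sum, Finset.mul_sum]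
    _ ≤ ∏ i ∈ s, (1 - a i) :=
        Finset.prod_le_prod (fun i _ => (Real.exp_pos _).le) (fun i _ => key i)

lemma norm_prod_one_add_sub_one_le {ι : Type*} (s : Finset ι) (z : ι → ℂ) :
    ‖(∏ i ∈ s, (1 + z i)) - 1‖ ≤ (∏ i ∈ s, (1 + ‖z i‖)) - 1 := by
  induction s using Finset.cons_induction with
  | empty => simp
  | cons a s ha ih =>
    rw [Finset.prod_cons, Finset.prod_cons]
    have hn : ‖∏ i ∈ s, (1 + z i)‖ ≤ ∏ i ∈ s, (1 + ‖z i‖) := by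
      refine le_trans (norm_prod_le _ _) (Finset.prod_le_prod (fun _ _ => norm_nonneg _)
        (fun i _ => by simpa using norm_add_le 1 (z i)))
    have step : (1 + z a) * ∏ i ∈ s, (1 + z i) - 1
        = (∏ i ∈ s, (1 + z i) - 1) + z a * ∏ i ∈ s, (1 + z i) := by ring
    rw [step]
    calc ‖(∏ i ∈ s, (1 + z i) - 1) + z a * ∏ i ∈ s, (1 + z i)‖
        ≤ ‖∏ i ∈ s, (1 + z i) - 1‖ + ‖z a‖ * ‖∏ i ∈ s, (1 + z i)‖ := by
          refine le_trans (norm_add_le _ _) ?_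
          rw [norm_mul]
      _ ≤ ((∏ i ∈ s, (1 + ‖z i‖)) - 1) + ‖z a‖ * ∏ i ∈ s, (1 + ‖z i‖) := by
          have h1 : (0:ℝ) ≤ ‖z a‖ := norm_nonneg _
          gcongr
      _ = (1 + ‖z a‖) * ∏ i ∈ s, (1 + ‖z i‖) - 1 := by ring

/-- Master lemma for products `∏ (1 + g n)`. -/
lemma multipliable_tprod_ne_zero (g : ℕ → ℂ) (h0 : ∀ n, ‖g n‖ < 1) (hs : Summable g) :
    Multipliable (fun n => 1 + g n) ∧ (∏' n, (1 + g n)) ≠ 0 := by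
  have hfn : ∀ (_ : Unit) (n : ℕ), 1 + g n ≠ 0 := by
    intro _ n h
    have : ‖g n‖ = 1 := by
      have : g n = -1 := by linear_combination h
      simp [this]
    exact absurd this (ne_of_lt (h0 n))
  have hlog : ∀ (_ : Unit), Summable (fun n => Complex.log (1 + g n)) := by
    intro _
    have htend : Tendsto (fun n => ‖g n‖) atTop (𝓝 0) := by
      simpa using hs.tendsto_atTop_zero.norm
    have hev : ∀ᶠ n in atTop, ‖Complex.log (1 + g n)‖ ≤ 3/2 * ‖g n‖ := by
      filter_upwards [htend.eventually_le_const (by norm_num : (0:ℝ) < 1/2)] with n hn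
      exact Complex.norm_log_one_add_half_le_self hn
    exact Summable.of_norm_bounded_eventually_nat ((hs.norm).mul_left (3/2)) hev
  have hm : Multipliable (fun n => 1 + g n) :=
    Complex.multipliable_of_summable_log (hlog ())
  refine ⟨hm, ?_⟩
  have : Complex.exp (∑' n, Complex.log (1 + g n)) = ∏' n, (1 + g n) :=
    Complex.cexp_tsum_eq_tprod (fun n => hfn () n) (hlog ())
  rw [← this]
  exact Complex.exp_ne_zero _

noncomputable def AA (x : ℂ) (N : ℕ) : ℂ := ∏ i ∈ range N, (1 - x^(i+1))

noncomputable def qb (x : ℂ) (m k : ℕ) : ℂ :=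
  (∏ i ∈ range (m-k), (1 - x^(k+i+1))) / AA x (m-k)

lemma choose_two_succ (n : ℕ) : (n+1).choose 2 = n.choose 2 + n := by
  rw [Nat.choose_two_right, Nat.choose_two_right]
  simp only [Nat.add_sub_cancel]
  exact Nat.triangle_succ n

section Jac
variable {x : ℂ}

lemma one_sub_pow_ne (hx : ‖x‖ < 1) (i : ℕ) : 1 - x^(i+1) ≠ 0 := by
  intro h
  have h1 : x^(i+1) = 1 := by linear_combination -h
  have h2 : ‖x^(i+1)‖ < 1 := by
    calc ‖x^(i+1)‖ = ‖x‖^(i+1) := norm_pow _ _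
    _ ≤ ‖x‖^1 := pow_le_pow_of_le_one (norm_nonneg _) hx.le (by omega)
    _ < 1 := by simpa using hx
  rw [h1] at h2; simp at h2

lemma AA_ne_zero (hx : ‖x‖ < 1) (N : ℕ) : AA x N ≠ 0 :=
  Finset.prod_ne_zero_iff.mpr (fun i _ => one_sub_pow_ne hx i)

lemma AA_succ (N : ℕ) : AA x (N+1) = AA x N * (1 - x^(N+1)) := Finset.prod_range_succ _ _

lemma qb_zero (hx : ‖x‖ < 1) (m : ℕ) : qb x m 0 = 1 := by
  simp only [qb, Nat.sub_zero, zero_add]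
  exact div_self (AA_ne_zero hx m)

lemma qb_top (m k : ℕ) (h : m ≤ k) : qb x m k = 1 := by
  have h0 : m - k = 0 := by omega
  simp [qb, h0, AA]

lemma qb_pascal (hx : ‖x‖ < 1) {m k : ℕ} (h1 : 1 ≤ k) (h2 : k ≤ m) :
    qb x (m+1) k = qb x m k + x^(m+1-k) * qb x m (k-1) := by
  obtain ⟨n, rfl⟩ : ∃ n, m = k + n := ⟨m - k, by omega⟩
  have e1 : k + n + 1 - k = n + 1 := by omega
  have e2 : k + n - k = n := by omega
  have e3 : k + n - (k-1) = n + 1 := by omega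
  simp only [qb, e1, e2, e3]
  have hnum1 : (∏ i ∈ range (n+1), (1 - x^(k+i+1)))
      = (∏ i ∈ range n, (1 - x^(k+i+1))) * (1 - x^(k+n+1)) := prod_range_succ _ _
  have hnum2 : (∏ i ∈ range (n+1), (1 - x^((k-1)+i+1)))
      = (∏ i ∈ range n, (1 - x^(k+i+1))) * (1 - x^k) := by
    rw [prod_range_succ']
    congr 1
    · apply Finset.prod_congr rfl; intro i _; congr 2; omega
    · congr 2; omega
  rw [hnum1, hnum2, AA_succ]
  have hA := AA_ne_zero hx n
  have hB := one_sub_pow_ne (x := x) hx n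
  have hkn : x^(k+n+1) = x^(n+1) * x^k := by rw [← pow_add]; congr 1; omega
  field_simp
  rw [hkn]; ring

lemma gauss_identity (hx : ‖x‖ < 1) (m : ℕ) (t : ℂ) :
    ∏ i ∈ range m, (1 + t * x^i) = ∑ k ∈ range (m+1), qb x m k * x^(k.choose 2) * t^k := by
  induction m with
  | zero => simp [qb, AA]
  | succ m ih =>
    rw [prod_range_succ, ih]
    have expand : (∑ k ∈ range (m+1), qb x m k * x^(k.choose 2) * t^k) * (1 + t*x^m)
        = (∑ k ∈ range (m+1), qb x m k * x^(k.choose 2) * t^k)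
          + ∑ k ∈ range (m+1), qb x m k * x^(k.choose 2 + m) * t^(k+1) := by
      rw [mul_add, mul_one, Finset.sum_mul]
      congr 1
      apply Finset.sum_congr rfl; intro k _
      rw [pow_add, pow_succ]; ring
    rw [expand]
    rw [sum_range_succ (fun k => qb x m k * x^(k.choose 2 + m) * t^(k+1)) m]
    rw [sum_range_succ (fun k => qb x (m+1) k * x^(k.choose 2) * t^k) (m+1)]
    have htop : qb x m m * x^(m.choose 2 + m) * t^(m+1)
        = qb x (m+1) (m+1) * x^((m+1).choose 2) * t^(m+1) := by
      rw [qb_top m m le_rfl, qb_top (m+1) (m+1) le_rfl]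
      congr 2
      rw [choose_two_succ]
    rw [← add_assoc, htop]
    congr 1
    rw [sum_range_succ' (fun k => qb x (m+1) k * x^(k.choose 2) * t^k) m]
    rw [sum_range_succ' (fun k => qb x m k * x^(k.choose 2) * t^k) m]
    rw [qb_zero hx, qb_zero hx]
    rw [add_right_comm, ← Finset.sum_add_distrib]
    congr 1
    apply Finset.sum_congr rfl
    intro k hk
    have hk' : k < m := Finset.mem_range.mp hk
    have hp := qb_pascal hx (k := k+1) (m := m) (by omega) (by omega)
    have hs : k + 1 - 1 = k := by omega
    rw [hs] at hp
    have he : m + 1 - (k+1) = m - k := by omega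
    rw [he] at hp
    rw [hp]
    have hexp : x^((k+1).choose 2) * x^(m-k) = x^(k.choose 2 + m) := by
      rw [← pow_add]; congr 1
      rw [choose_two_succ]; omega
    rw [add_mul, add_mul]
    congr 1
    rw [← hexp]; ring
end Jac

lemma choose_two_cast (n : ℕ) : 2 * ((n.choose 2 : ℤ)) = n * ((n:ℤ) - 1) := by
  cases n with
  | zero => simp
  | succ m =>
    have h := two_mul_choose_two (m+1)
    simp only [Nat.add_sub_cancel] at h
    have h2 : ((2 * (m+1).choose 2 : ℕ) : ℤ) = (((m+1) * m : ℕ) : ℤ) := by rw [h]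
    push_cast at h2 ⊢
    linarith

noncomputable def xE (x : ℂ) (N k : ℕ) : ℂ :=
  if N ≤ k then x^((k-N+1).choose 2) else x^((N-k).choose 2)

noncomputable def dd (x : ℂ) (N k : ℕ) : ℂ := (-1)^(N+k) * qb x (2*N) k * xE x N k

section Jac2
variable {x : ℂ}

lemma xE_pow (hx0 : x ≠ 0) (N k : ℕ) :
    x^((N.choose 2 : ℤ)) * x^((k.choose 2 : ℤ)) * x^((1 - (N:ℤ)) * k) = xE x N k := by
  rw [← zpow_add₀ hx0, ← zpow_add₀ hx0, xE]
  by_cases h : N ≤ k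
  · rw [if_pos h]
    obtain ⟨j, rfl⟩ : ∃ j, k = N + j := ⟨k - N, by omega⟩
    rw [← zpow_natCast x ((N+j-N+1).choose 2)]
    congr 1
    have e1 : N + j - N + 1 = j + 1 := by omega
    rw [e1]
    refine mul_left_cancel₀ (a := (2:ℤ)) two_ne_zero ?_
    rw [mul_add, mul_add, choose_two_cast, choose_two_cast, choose_two_cast]
    push_cast
    ring
  · rw [if_neg h]
    obtain ⟨j, rfl⟩ : ∃ j, N = k + j + 1 := ⟨N - k - 1, by omega⟩
    rw [← zpow_natCast x ((k+j+1-k).choose 2)]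
    congr 1
    have e1 : k + j + 1 - k = j + 1 := by omega
    rw [e1]
    refine mul_left_cancel₀ (a := (2:ℤ)) two_ne_zero ?_
    rw [mul_add, mul_add, choose_two_cast, choose_two_cast, choose_two_cast]
    push_cast
    ring

lemma sum_range_choose_two (N : ℕ) : ∑ i ∈ range N, i = N.choose 2 := by
  have h1 := Finset.sum_range_id_mul_two N
  have h2 := two_mul_choose_two N
  have h3 : (∑ i ∈ range N, i) * 2 = N.choose 2 * 2 := by rw [h1, ← h2]; ring
  omega

lemma jacobi_finite_z (hx : ‖x‖ < 1) (hx0 : x ≠ 0) (N : ℕ) (z : ℂ) :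
    (∏ i ∈ range N, (1 - x^(i+1) * z)) * (∏ i ∈ range N, (z - x^i))
      = ∑ k ∈ range (2*N+1), dd x N k * z^k := by
  set t : ℂ := -(x ^ ((1:ℤ) - N)) * z with ht
  have hsecond : (∏ i ∈ range N, (z - x^i))
      = (-1)^N * x^(N.choose 2) * ∏ i ∈ range N, (1 + t * x^i) := by
    have hrefl : ∏ i ∈ range N, (1 + t * x^i)
        = ∏ i ∈ range N, (1 - x^(-((i : ℕ):ℤ)) * z) := by
      rw [← Finset.prod_range_reflect (fun i => 1 - x^(-((i : ℕ):ℤ)) * z) N]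
      apply Finset.prod_congr rfl
      intro j hj
      have hj' : j < N := Finset.mem_range.mp hj
      have hxe : x ^ ((1:ℤ) - N) * x^j = x^(-(((N-1-j : ℕ)):ℤ)) := by
        rw [← zpow_natCast x j, ← zpow_add₀ hx0]
        congr 1
        have : ((N - 1 - j : ℕ) : ℤ) = (N : ℤ) - 1 - j := by omega
        rw [this]; ring
      rw [ht]
      have expand : 1 + -(x ^ ((1:ℤ) - N)) * z * x^j = 1 - (x ^ ((1:ℤ) - N) * x^j) * z := by ring
      rw [expand, hxe]
    have hfact : ∀ i : ℕ, z - x^i = (-(x^i)) * (1 - x^(-((i:ℕ):ℤ)) * z) := by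
      intro i
      have hinv : (x:ℂ)^i * x^(-((i:ℕ):ℤ)) = 1 := by
        rw [← zpow_natCast x i, ← zpow_add₀ hx0]
        simp
      have expand : (-(x^i)) * (1 - x^(-((i:ℕ):ℤ)) * z) = -(x^i) + (x^i * x^(-((i:ℕ):ℤ))) * z := by
        ring
      rw [expand, hinv]; ring
    calc (∏ i ∈ range N, (z - x^i))
        = ∏ i ∈ range N, ((-(x^i)) * (1 - x^(-((i:ℕ):ℤ)) * z)) :=
          Finset.prod_congr rfl (fun i _ => hfact i)
      _ = (∏ i ∈ range N, (-(x^i))) * ∏ i ∈ range N, (1 - x^(-((i:ℕ):ℤ)) * z) :=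
          Finset.prod_mul_distrib
      _ = (-1)^N * x^(N.choose 2) * ∏ i ∈ range N, (1 + t * x^i) := by
          rw [← hrefl]
          congr 1
          have hneg : (∏ i ∈ range N, (-(x^i))) = (-1)^N * ∏ i ∈ range N, x^i := by
            calc (∏ i ∈ range N, (-(x^i))) = ∏ i ∈ range N, ((-1) * x^i) := by
                  apply Finset.prod_congr rfl; intros; ring
              _ = (∏ _i ∈ range N, (-1:ℂ)) * ∏ i ∈ range N, x^i := Finset.prod_mul_distrib
              _ = (-1)^N * ∏ i ∈ range N, x^i := by rw [Finset.prod_const, Finset.card_range]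
          rw [hneg, Finset.prod_pow_eq_pow_sum, sum_range_choose_two]
  have hfirst : (∏ i ∈ range N, (1 - x^(i+1) * z)) = ∏ i ∈ range N, (1 + t * x^(N + i)) := by
    apply Finset.prod_congr rfl
    intro i _
    have hxe : x ^ ((1:ℤ) - N) * x^(N + i) = x^(i+1) := by
      rw [← zpow_natCast x (N+i), ← zpow_natCast x (i+1), ← zpow_add₀ hx0]
      congr 1; push_cast; ring
    rw [ht]
    have expand : 1 + -(x ^ ((1:ℤ) - N)) * z * x^(N+i) = 1 - (x ^ ((1:ℤ)-N) * x^(N+i)) * z := by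
      ring
    rw [expand, hxe]
  have hcombine : (∏ i ∈ range N, (1 + t * x^(N+i))) * (∏ i ∈ range N, (1 + t * x^i))
      = ∏ i ∈ range (2*N), (1 + t * x^i) := by
    have h2N : 2*N = N + N := by ring
    rw [h2N, Finset.prod_range_add]
    ring
  rw [hfirst, hsecond]
  have hre : (∏ i ∈ range N, (1 + t * x ^ (N + i))) * ((-1)^N * x^(N.choose 2) * ∏ i ∈ range N, (1 + t * x^i))
      = (-1)^N * x^(N.choose 2) * ∏ i ∈ range (2*N), (1 + t * x^i) := by
    rw [← hcombine]; ring
  rw [hre, gauss_identity hx (2*N) t, Finset.mul_sum]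
  apply Finset.sum_congr rfl
  intro k _
  rw [dd, ← xE_pow hx0 N k]
  have htk : t^k = (-1)^k * x^(((1:ℤ) - N)*k) * z^k := by
    rw [ht, neg_mul, neg_pow, mul_pow, ← zpow_natCast (x ^ ((1:ℤ) - N)) k, ← zpow_mul]
    ring
  rw [htk, ← zpow_natCast x (N.choose 2), ← zpow_natCast x (k.choose 2), pow_add]
  ring
end Jac2
section JacLimit
variable {x : ℂ}

lemma sum_dd_eq_zero (hx : ‖x‖ < 1) (hx0 : x ≠ 0) {N : ℕ} (hN : 1 ≤ N) :
    ∑ k ∈ range (2*N+1), dd x N k = 0 := by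
  have h := jacobi_finite_z hx hx0 N 1
  have hzero : (∏ i ∈ range N, ((1:ℂ) - x^i)) = 0 := by
    apply Finset.prod_eq_zero (Finset.mem_range.mpr (by omega : 0 < N))
    simp
  simp only [one_pow, mul_one] at h
  rw [hzero, mul_zero] at h
  exact h.symm

lemma deriv_identity (hx : ‖x‖ < 1) (hx0 : x ≠ 0) {N : ℕ} (hN : 1 ≤ N) :
    AA x N * AA x (N-1) = ∑ k ∈ range (2*N+1), dd x N k * k := by
  obtain ⟨M, rfl⟩ : ∃ M, N = M+1 := ⟨N-1, by omega⟩
  set G : ℂ → ℂ := fun z => (∏ i ∈ range (M+1), (1 - x^(i+1)*z)) * (∏ i ∈ range M, (z - x^(i+1)))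
    with hGdef
  set H : ℂ → ℂ := fun z => ∑ k ∈ range (2*(M+1)+1), dd x (M+1) k * (∑ t ∈ range k, z^t)
    with hHdef
  have claim : ∀ z : ℂ, z ≠ 1 → G z = H z := by
    intro z hz
    apply mul_left_cancel₀ (sub_ne_zero.mpr hz)
    have hsplit : (∏ i ∈ range (M+1), (z - x^i)) = (z - 1) * ∏ i ∈ range M, (z - x^(i+1)) := by
      rw [Finset.prod_range_succ' (fun i => z - x^i) M]
      simp [mul_comm]
    have hjac := jacobi_finite_z hx hx0 (M+1) z
    rw [hsplit] at hjac
    have hL : (z - 1) * G z = ∑ k ∈ range (2*(M+1)+1), dd x (M+1) k * z^k := by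
      rw [hGdef, ← hjac]; ring
    have hR : (z - 1) * H z = ∑ k ∈ range (2*(M+1)+1), dd x (M+1) k * z^k := by
      rw [hHdef]
      rw [Finset.mul_sum]
      have step : ∀ k : ℕ, (z - 1) * (dd x (M+1) k * (∑ t ∈ range k, z^t))
          = dd x (M+1) k * z^k - dd x (M+1) k := by
        intro k
        have := geom_sum_mul z k
        calc (z - 1) * (dd x (M+1) k * (∑ t ∈ range k, z^t))
            = dd x (M+1) k * ((∑ t ∈ range k, z^t) * (z - 1)) := by ring
          _ = dd x (M+1) k * (z^k - 1) := by rw [this]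
          _ = dd x (M+1) k * z^k - dd x (M+1) k := by ring
      rw [Finset.sum_congr rfl (fun k _ => step k), Finset.sum_sub_distrib,
        sum_dd_eq_zero hx hx0 (by omega : 1 ≤ M+1)]
      ring
    rw [hL, hR]
  have hG : Continuous G := by
    apply Continuous.mul <;> exact continuous_finset_prod _ (fun i _ => by continuity)
  have hH : Continuous H := by
    apply continuous_finset_sum
    intro k _
    exact (continuous_const.mul (continuous_finset_sum _ (fun t _ => by continuity)))
  have heq : G = H :=
    Continuous.ext_on (dense_compl_singleton (1:ℂ)) hG hH (fun z hz => claim z hz)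
  have h1 : G 1 = AA x (M+1) * AA x M := by
    rw [hGdef]
    simp only [mul_one]
    rfl
  have h2 : H 1 = ∑ k ∈ range (2*(M+1)+1), dd x (M+1) k * k := by
    rw [hHdef]
    apply Finset.sum_congr rfl
    intro k _
    congr 1
    simp
  have := congrFun heq 1
  rw [h1, h2] at this
  simpa using this

noncomputable def Pinf (x : ℂ) : ℂ := ∏' n : ℕ, (1 - x^(n+1))

lemma summable_pow_succ (hx : ‖x‖ < 1) : Summable (fun n : ℕ => -(x^(n+1))) := by
  apply Summable.neg
  have h := (summable_geometric_of_norm_lt_one hx).mul_left x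
  apply h.congr
  intro n
  rw [← pow_succ']

lemma multipliable_P (hx : ‖x‖ < 1) :
    Multipliable (fun n : ℕ => 1 - x^(n+1)) ∧ Pinf x ≠ 0 := by
  have h := multipliable_tprod_ne_zero (fun n => -(x^(n+1)))
    (fun n => by
      rw [norm_neg, norm_pow]
      calc ‖x‖^(n+1) ≤ ‖x‖^1 := pow_le_pow_of_le_one (norm_nonneg _) hx.le (by omega)
      _ < 1 := by simpa using hx)
    (summable_pow_succ hx)
  constructor
  · exact h.1.congr (fun n => by ring)
  · have he : Pinf x = ∏' n : ℕ, (1 + -(x^(n+1))) := tprod_congr (fun n => by ring)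
    rw [he]
    exact h.2

lemma AA_tendsto (hx : ‖x‖ < 1) : Filter.Tendsto (fun N => AA x N) atTop (nhds (Pinf x)) :=
  (multipliable_P hx).1.hasProd.tendsto_prod_nat

/-- partial geometric sums bound -/
lemma geom_partial_bound {r : ℝ} (h0 : 0 ≤ r) (h1 : r < 1) (n : ℕ) (c : ℕ → ℕ)
    (hc : ∀ i, i + 1 ≤ c i) :
    ∑ i ∈ range n, r^(c i) ≤ r / (1-r) := by
  have hsum : Summable (fun i : ℕ => r^(i+1)) := by
    have h := (summable_geometric_of_lt_one h0 h1).mul_left r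
    apply h.congr; intro i; rw [← pow_succ']
  calc ∑ i ∈ range n, r^(c i) ≤ ∑ i ∈ range n, r^(i+1) := by
        apply Finset.sum_le_sum
        intro i _
        exact pow_le_pow_of_le_one h0 h1.le (hc i)
    _ ≤ ∑' i : ℕ, r^(i+1) := Summable.sum_le_tsum _ (fun i _ => pow_nonneg h0 _) hsum
    _ = r * ∑' i : ℕ, r^i := by
        rw [← tsum_mul_left]
        apply tsum_congr; intro i; rw [← pow_succ']
    _ = r * (1-r)⁻¹ := by rw [tsum_geometric_of_lt_one h0 h1]
    _ = r / (1-r) := by rw [div_eq_mul_inv]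

/-- upper bound for norms of products of (1 ± small) -/
lemma norm_prod_one_sub_le (hx : ‖x‖ < 1) (n : ℕ) (c : ℕ → ℕ) (hc : ∀ i, i + 1 ≤ c i) :
    ‖∏ i ∈ range n, (1 - x^(c i))‖ ≤ Real.exp (‖x‖ / (1 - ‖x‖)) := by
  calc ‖∏ i ∈ range n, (1 - x^(c i))‖ = ∏ i ∈ range n, ‖1 - x^(c i)‖ := norm_prod _ _
    _ ≤ ∏ i ∈ range n, (1 + ‖x‖^(c i)) := by
        apply Finset.prod_le_prod (fun i _ => norm_nonneg _)
        intro i _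
        calc ‖1 - x^(c i)‖ ≤ ‖(1:ℂ)‖ + ‖x^(c i)‖ := norm_sub_le _ _
          _ = 1 + ‖x‖^(c i) := by rw [norm_one, norm_pow]
    _ ≤ Real.exp (∑ i ∈ range n, ‖x‖^(c i)) :=
        prod_one_add_le_exp _ _ (fun i => pow_nonneg (norm_nonneg _) _)
    _ ≤ Real.exp (‖x‖ / (1 - ‖x‖)) := by
        apply Real.exp_le_exp.mpr
        exact geom_partial_bound (norm_nonneg _) hx n c hc

/-- lower bound for norms of AA-type products -/
lemma norm_prod_one_sub_ge (hx : ‖x‖ < 1) (n : ℕ) (c : ℕ → ℕ) (hc : ∀ i, i + 1 ≤ c i) :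
    Real.exp (-(1 - ‖x‖)⁻¹ * (‖x‖ / (1 - ‖x‖))) ≤ ‖∏ i ∈ range n, (1 - x^(c i))‖ := by
  have h0 : 0 ≤ ‖x‖ := norm_nonneg _
  calc Real.exp (-(1 - ‖x‖)⁻¹ * (‖x‖ / (1 - ‖x‖)))
      ≤ Real.exp (-(1 - ‖x‖)⁻¹ * ∑ i ∈ range n, ‖x‖^(c i)) := by
        apply Real.exp_le_exp.mpr
        have hb := geom_partial_bound h0 hx n c hc
        have hpos : (0:ℝ) ≤ (1 - ‖x‖)⁻¹ := by
          apply inv_nonneg.mpr; linarith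
        nlinarith [hb, hpos]
    _ ≤ ∏ i ∈ range n, (1 - ‖x‖^(c i)) := by
        apply exp_le_prod_one_sub _ _ hx
        · intro i; exact pow_nonneg h0 _
        · intro i
          calc ‖x‖^(c i) ≤ ‖x‖^1 := pow_le_pow_of_le_one h0 hx.le (by have := hc i; omega)
            _ = ‖x‖ := pow_one _
    _ ≤ ∏ i ∈ range n, ‖1 - x^(c i)‖ := by
        apply Finset.prod_le_prod
        · intro i _
          have : ‖x‖^(c i) ≤ ‖x‖ := by
            calc ‖x‖^(c i) ≤ ‖x‖^1 := pow_le_pow_of_le_one h0 hx.le (by have := hc i; omega)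
              _ = ‖x‖ := pow_one _
          linarith
        · intro i _
          have h1 : ‖(1:ℂ)‖ - ‖x^(c i)‖ ≤ ‖1 - x^(c i)‖ := norm_sub_norm_le _ _
          rw [norm_one, norm_pow] at h1
          exact h1
    _ = ‖∏ i ∈ range n, (1 - x^(c i))‖ := (norm_prod _ _).symm

noncomputable def Cqb (r : ℝ) : ℝ := Real.exp (r / (1-r)) * Real.exp ((1-r)⁻¹ * (r/(1-r)))

lemma Cqb_pos (r : ℝ) : 0 < Cqb r := by
  apply mul_pos <;> exact Real.exp_pos _

lemma qb_norm_le (hx : ‖x‖ < 1) (m k : ℕ) (hk : k ≤ m) : ‖qb x m k‖ ≤ Cqb ‖x‖ := by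
  rw [qb, norm_div, Cqb]
  have hden : Real.exp (-(1 - ‖x‖)⁻¹ * (‖x‖ / (1 - ‖x‖))) ≤ ‖AA x (m-k)‖ :=
    norm_prod_one_sub_ge hx (m-k) (fun i => i+1) (fun i => le_rfl)
  have hnum : ‖∏ i ∈ range (m-k), (1 - x^(k+i+1))‖ ≤ Real.exp (‖x‖ / (1 - ‖x‖)) :=
    norm_prod_one_sub_le hx (m-k) (fun i => k+i+1) (fun i => by show i+1 ≤ k+i+1; omega)
  have hdpos : (0:ℝ) < Real.exp (-(1 - ‖x‖)⁻¹ * (‖x‖ / (1 - ‖x‖))) := Real.exp_pos _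
  have hAApos : (0:ℝ) < ‖AA x (m-k)‖ := lt_of_lt_of_le hdpos hden
  rw [div_le_iff₀ hAApos]
  calc ‖∏ i ∈ range (m-k), (1 - x^(k+i+1))‖ ≤ Real.exp (‖x‖ / (1 - ‖x‖)) := hnum
    _ = Real.exp (‖x‖ / (1-‖x‖)) * Real.exp ((1-‖x‖)⁻¹ * (‖x‖/(1-‖x‖)))
        * Real.exp (-(1 - ‖x‖)⁻¹ * (‖x‖ / (1 - ‖x‖))) := by
        rw [mul_assoc, ← Real.exp_add, neg_mul, add_neg_cancel, Real.exp_zero, mul_one]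
    _ ≤ Real.exp (‖x‖ / (1-‖x‖)) * Real.exp ((1-‖x‖)⁻¹ * (‖x‖/(1-‖x‖))) * ‖AA x (m-k)‖ := by
        apply mul_le_mul_of_nonneg_left hden
        positivity
end JacLimit

section JacLimit2
variable {x : ℂ}

lemma norm_prod_sub_one_le (hx : ‖x‖ < 1) (n : ℕ) (c : ℕ → ℕ) :
    ‖(∏ i ∈ range n, (1 - x^(c i))) - 1‖ ≤ Real.exp (∑ i ∈ range n, ‖x‖^(c i)) - 1 := by
  have h1 : (∏ i ∈ range n, (1 - x^(c i))) = ∏ i ∈ range n, (1 + (-(x^(c i)))) :=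
    Finset.prod_congr rfl (fun i _ => by ring)
  rw [h1]
  calc ‖(∏ i ∈ range n, (1 + (-(x^(c i))))) - 1‖
      ≤ (∏ i ∈ range n, (1 + ‖-(x^(c i))‖)) - 1 := norm_prod_one_add_sub_one_le _ _
    _ ≤ Real.exp (∑ i ∈ range n, ‖x‖^(c i)) - 1 := by
        have := prod_one_add_le_exp (range n) (fun i => ‖-(x^(c i))‖) (fun i => norm_nonneg _)
        simp only [norm_neg, norm_pow] at this ⊢
        linarith

lemma num_tendsto_one (hx : ‖x‖ < 1) (k : ℕ → ℕ) (n : ℕ → ℕ)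
    (hk2 : Tendsto k atTop atTop) :
    Tendsto (fun N => ∏ i ∈ range (n N), (1 - x^(k N + i + 1))) atTop (𝓝 1) := by
  rw [tendsto_iff_norm_sub_tendsto_zero]
  have hr0 : (0:ℝ) ≤ ‖x‖ := norm_nonneg _
  apply squeeze_zero (g := fun N => Real.exp (‖x‖^(k N) * (‖x‖ / (1 - ‖x‖))) - 1)
    (fun N => norm_nonneg _)
  · intro N
    calc ‖(∏ i ∈ range (n N), (1 - x^(k N + i + 1))) - 1‖
        ≤ Real.exp (∑ i ∈ range (n N), ‖x‖^(k N + i + 1)) - 1 :=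
          norm_prod_sub_one_le hx _ _
      _ ≤ Real.exp (‖x‖^(k N) * (‖x‖ / (1 - ‖x‖))) - 1 := by
          have hsum : ∑ i ∈ range (n N), ‖x‖^(k N + i + 1)
              = ‖x‖^(k N) * ∑ i ∈ range (n N), ‖x‖^(i+1) := by
            rw [Finset.mul_sum]
            apply Finset.sum_congr rfl
            intro i _
            rw [← pow_add]
            congr 1 <;> omega
          have hgeom := geom_partial_bound hr0 hx (n N) (fun i => i + 1) (fun i => le_rfl)
          have : ∑ i ∈ range (n N), ‖x‖^(k N + i + 1) ≤ ‖x‖^(k N) * (‖x‖ / (1 - ‖x‖)) := by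
            rw [hsum]
            apply mul_le_mul_of_nonneg_left hgeom (pow_nonneg hr0 _)
          gcongr
  · have h1 : Tendsto (fun N => ‖x‖^(k N)) atTop (𝓝 0) := by
      have := (tendsto_pow_atTop_nhds_zero_of_norm_lt_one
        (by rwa [Real.norm_of_nonneg hr0] : ‖‖x‖‖ < 1)).comp hk2
      exact this
    have h2 : Tendsto (fun N => Real.exp (‖x‖^(k N) * (‖x‖ / (1 - ‖x‖))) - 1) atTop
        (𝓝 (Real.exp (0 * (‖x‖ / (1 - ‖x‖))) - 1)) := by
      apply Tendsto.sub_const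
      exact (Real.continuous_exp.tendsto _).comp (h1.mul_const _)
    simpa using h2

lemma qb_tendsto_gen (hx : ‖x‖ < 1) (hx0 : x ≠ 0) (k : ℕ → ℕ)
    (hk2 : Tendsto k atTop atTop) (hs : Tendsto (fun N => 2*N - k N) atTop atTop) :
    Tendsto (fun N => qb x (2*N) (k N)) atTop (𝓝 (Pinf x)⁻¹) := by
  have hP := multipliable_P hx
  have hden : Tendsto (fun N => AA x (2*N - k N)) atTop (𝓝 (Pinf x)) :=
    (AA_tendsto hx).comp hs
  have hnum := num_tendsto_one hx k (fun N => 2*N - k N) hk2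
  have := hnum.div hden hP.2
  simpa only [qb, one_div, Pi.div_def] using this

noncomputable def fpos (x : ℂ) (n : ℕ) : ℂ := (-1)^n * n * x^((n+1).choose 2) / Pinf x
noncomputable def fneg (x : ℂ) (n : ℕ) : ℂ := (-1)^n * ((n:ℂ)+1) * x^((n+1).choose 2) / Pinf x
noncomputable def glim (x : ℂ) : ℤ → ℂ := fun j => Int.rec (fpos x) (fneg x) j
noncomputable def fN (x : ℂ) (N : ℕ) (j : ℤ) : ℂ :=
  if -(N:ℤ) ≤ j ∧ j ≤ N then dd x N ((N+j).toNat) * (j:ℂ) else 0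

lemma fN_sum (hx : ‖x‖ < 1) (hx0 : x ≠ 0) {N : ℕ} (hN : 1 ≤ N) :
    AA x N * AA x (N-1) = ∑' j : ℤ, fN x N j := by
  have hsupp : ∀ j ∉ Finset.Icc (-(N:ℤ)) N, fN x N j = 0 := by
    intro j hj
    rw [Finset.mem_Icc] at hj
    rw [fN, if_neg (by omega)]
  rw [tsum_eq_sum hsupp]
  have hbij : ∑ j ∈ Finset.Icc (-(N:ℤ)) N, fN x N j
      = ∑ k ∈ range (2*N+1), dd x N k * (((k:ℤ) - N : ℤ) : ℂ) := by
    apply Finset.sum_bij' (i := fun (j : ℤ) (_ : j ∈ Finset.Icc (-(N:ℤ)) N) => ((N:ℤ)+j).toNat)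
      (j := fun (k : ℕ) (_ : k ∈ range (2*N+1)) => (k : ℤ) - N)
    · intro a ha
      rw [Finset.mem_Icc] at ha
      rw [Finset.mem_range]
      omega
    · intro a ha
      rw [Finset.mem_range] at ha
      rw [Finset.mem_Icc]
      omega
    · intro a ha
      rw [Finset.mem_Icc] at ha
      omega
    · intro a ha
      rw [Finset.mem_range] at ha
      omega
    · intro a ha
      rw [Finset.mem_Icc] at ha
      rw [fN, if_pos (by omega)]
      congr 1
      rw [show ((((N:ℤ)+a).toNat : ℤ) - (N:ℤ)) = a from by omega]
  rw [hbij]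
  have hexp : ∀ k : ℕ, dd x N k * (((k:ℤ) - N : ℤ) : ℂ) = dd x N k * k - dd x N k * N := by
    intro k; push_cast; ring
  rw [Finset.sum_congr rfl (fun k _ => hexp k), Finset.sum_sub_distrib, ← Finset.sum_mul,
    sum_dd_eq_zero hx hx0 hN, deriv_identity hx hx0 hN]
  ring

end JacLimit2

section JacLimit3
variable {x : ℂ}

lemma pow_choose_le (hx : ‖x‖ < 1) (n : ℕ) : ‖x‖^((n+1).choose 2) ≤ ‖x‖^n := by
  apply pow_le_pow_of_le_one (norm_nonneg _) hx.le
  have h1 := two_mul_choose_two (n+1)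
  simp only [Nat.add_sub_cancel] at h1
  have h2 : 2*n ≤ 2*((n+1).choose 2) := by
    rw [h1]
    nlinarith
  omega

lemma summable_nat_geom (hx : ‖x‖ < 1) (c : ℝ) :
    Summable (fun n : ℕ => c * (((n:ℝ)+1) * ‖x‖^n)) := by
  have hr : ‖(‖x‖)‖ < 1 := by rwa [Real.norm_of_nonneg (norm_nonneg _)]
  have h1 : Summable (fun n : ℕ => (n:ℝ)^1 * ‖x‖^n) :=
    summable_pow_mul_geometric_of_norm_lt_one 1 hr
  have h2 : Summable (fun n : ℕ => ‖x‖^n) := summable_geometric_of_lt_one (norm_nonneg _) hx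
  have h3 : Summable (fun n : ℕ => (n:ℝ) * ‖x‖^n + ‖x‖^n) := by
    apply Summable.add _ h2
    apply h1.congr; intro n; rw [pow_one]
  exact (h3.congr (fun n => by ring)).mul_left c

noncomputable def bnd (r : ℝ) (C : ℝ) : ℤ → ℝ :=
  fun j => Int.rec (fun n => C * ((n:ℝ) * r^((n+1).choose 2)))
    (fun n => C * (((n:ℝ)+1) * r^((n+1).choose 2))) j

lemma bnd_summable (hx : ‖x‖ < 1) : Summable (bnd ‖x‖ (Cqb ‖x‖)) := by
  set C := Cqb ‖x‖ with hC
  have hC0 : 0 ≤ C := (Cqb_pos _).le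
  have hmaj := summable_nat_geom hx C
  apply Summable.int_rec
  · apply Summable.of_nonneg_of_le _ _ hmaj
    · intro n; positivity
    · intro n
      have := pow_choose_le hx n
      have h1 : (n:ℝ) * ‖x‖^((n+1).choose 2) ≤ ((n:ℝ)+1) * ‖x‖^n := by
        have : (n:ℝ) * ‖x‖^((n+1).choose 2) ≤ (n:ℝ) * ‖x‖^n := by
          apply mul_le_mul_of_nonneg_left this (by positivity)
        nlinarith [pow_nonneg (norm_nonneg x) n]
      apply mul_le_mul_of_nonneg_left h1 hC0
  · apply Summable.of_nonneg_of_le _ _ hmaj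
    · intro n; positivity
    · intro n
      have h1 : ((n:ℝ)+1) * ‖x‖^((n+1).choose 2) ≤ ((n:ℝ)+1) * ‖x‖^n := by
        apply mul_le_mul_of_nonneg_left (pow_choose_le hx n) (by positivity)
      apply mul_le_mul_of_nonneg_left h1 hC0

lemma neg_one_pow_two_mul_add (m n : ℕ) : ((-1:ℂ))^(2*m+n) = (-1)^n := by
  rw [pow_add, pow_mul]
  norm_num

lemma fN_tendsto (hx : ‖x‖ < 1) (hx0 : x ≠ 0) (j : ℤ) :
    Tendsto (fun N => fN x N j) atTop (𝓝 (glim x j)) := by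
  cases j with
  | ofNat n =>
    have hev : (fun N => ((-1)^n * (n:ℂ) * x^((n+1).choose 2)) * qb x (2*N) (N+n))
        =ᶠ[atTop] (fun N => fN x N (Int.ofNat n)) := by
      filter_upwards [eventually_ge_atTop n] with N hN
      rw [fN, if_pos (by simp only [Int.ofNat_eq_coe]; omega)]
      have hk : ((N:ℤ) + Int.ofNat n).toNat = N + n := by simp only [Int.ofNat_eq_coe]; omega
      rw [hk, dd]
      have hsgn : ((-1:ℂ))^(N + (N+n)) = (-1)^n := by
        rw [show N + (N+n) = 2*N + n from by omega, neg_one_pow_two_mul_add]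
      have hxE : xE x N (N+n) = x^((n+1).choose 2) := by
        rw [xE, if_pos (by omega)]
        congr 2
        omega
      rw [hsgn, hxE]
      push_cast [Int.ofNat_eq_coe]
      ring
    have hq := qb_tendsto_gen hx hx0 (fun N => N + n)
      (tendsto_atTop_mono (fun N => by simp only [id_eq]; omega) tendsto_id)
      ((tendsto_sub_atTop_nat n).congr (fun N => by show N - n = 2*N - (N+n); omega))
    have := (hq.const_mul ((-1)^n * (n:ℂ) * x^((n+1).choose 2))).congr' hev
    have hval : ((-1)^n * (n:ℂ) * x^((n+1).choose 2)) * (Pinf x)⁻¹ = glim x (Int.ofNat n) := by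
      show _ = fpos x n
      rw [fpos, div_eq_mul_inv]
    rwa [hval] at this
  | negSucc n =>
    have hev : (fun N => ((-1)^n * ((n:ℂ)+1) * x^((n+1).choose 2)) * qb x (2*N) (N-(n+1)))
        =ᶠ[atTop] (fun N => fN x N (Int.negSucc n)) := by
      filter_upwards [eventually_ge_atTop (n+1)] with N hN
      rw [fN, if_pos (by simp only [Int.negSucc_eq]; omega)]
      have hk : ((N:ℤ) + Int.negSucc n).toNat = N - (n+1) := by
        simp only [Int.negSucc_eq]; omega
      rw [hk, dd]
      have hsgn : ((-1:ℂ))^(N + (N-(n+1))) = -((-1)^n) := by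
        rw [show N + (N-(n+1)) = 2*(N-(n+1)) + (n+1) from by omega, neg_one_pow_two_mul_add,
          pow_succ]
        ring
      have hxE : xE x N (N-(n+1)) = x^((n+1).choose 2) := by
        rw [xE, if_neg (by omega)]
        congr 2
        omega
      rw [hsgn, hxE]
      have hcast : ((Int.negSucc n : ℤ) : ℂ) = -((n:ℂ)+1) := by
        rw [show Int.negSucc n = -((n+1 : ℕ) : ℤ) from rfl]
        push_cast
        ring
      rw [hcast]
      ring
    have hq := qb_tendsto_gen hx hx0 (fun N => N - (n+1))
      (tendsto_sub_atTop_nat (n+1))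
      (tendsto_atTop_mono (fun N => by simp only [id_eq]; omega) tendsto_id)
    have := (hq.const_mul ((-1)^n * ((n:ℂ)+1) * x^((n+1).choose 2))).congr' hev
    have hval : ((-1)^n * ((n:ℂ)+1) * x^((n+1).choose 2)) * (Pinf x)⁻¹ = glim x (Int.negSucc n) := by
      show _ = fneg x n
      rw [fneg, div_eq_mul_inv]
    rwa [hval] at this

lemma fN_bound (hx : ‖x‖ < 1) (N : ℕ) (j : ℤ) :
    ‖fN x N j‖ ≤ bnd ‖x‖ (Cqb ‖x‖) j := by
  have hC0 : 0 ≤ Cqb ‖x‖ := (Cqb_pos _).le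
  cases j with
  | ofNat n =>
    show ‖fN x N (Int.ofNat n)‖ ≤ Cqb ‖x‖ * ((n:ℝ) * ‖x‖^((n+1).choose 2))
    by_cases h : -(N:ℤ) ≤ (Int.ofNat n) ∧ (Int.ofNat n) ≤ N
    · rw [fN, if_pos h]
      obtain ⟨h1', h2'⟩ := h
      simp only [Int.ofNat_eq_coe] at h1' h2'
      have hn : n ≤ N := by omega
      have hk : ((N:ℤ) + Int.ofNat n).toNat = N + n := by simp only [Int.ofNat_eq_coe]; omega
      rw [hk, dd]
      have hxE : xE x N (N+n) = x^((n+1).choose 2) := by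
        rw [xE, if_pos (by omega)]; congr 2; omega
      rw [hxE]
      rw [norm_mul, norm_mul, norm_mul, norm_pow, norm_pow, norm_neg, norm_one, one_pow, one_mul]
      have hqb : ‖qb x (2*N) (N+n)‖ ≤ Cqb ‖x‖ := qb_norm_le hx (2*N) (N+n) (by omega)
      have hc : ‖((Int.ofNat n : ℤ) : ℂ)‖ = (n:ℝ) := by
        simp
      rw [hc]
      calc ‖qb x (2*N) (N+n)‖ * ‖x‖^((n+1).choose 2) * (n:ℝ)
          ≤ Cqb ‖x‖ * ‖x‖^((n+1).choose 2) * (n:ℝ) := by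
            apply mul_le_mul_of_nonneg_right (mul_le_mul_of_nonneg_right hqb (by positivity))
              (by positivity)
        _ = Cqb ‖x‖ * ((n:ℝ) * ‖x‖^((n+1).choose 2)) := by ring
    · rw [fN, if_neg h, norm_zero]
      positivity
  | negSucc n =>
    show ‖fN x N (Int.negSucc n)‖ ≤ Cqb ‖x‖ * (((n:ℝ)+1) * ‖x‖^((n+1).choose 2))
    by_cases h : -(N:ℤ) ≤ (Int.negSucc n) ∧ (Int.negSucc n) ≤ N
    · rw [fN, if_pos h]
      obtain ⟨h1', h2'⟩ := h
      simp only [Int.negSucc_eq] at h1' h2'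
      have hn : n + 1 ≤ N := by omega
      have hk : ((N:ℤ) + Int.negSucc n).toNat = N - (n+1) := by
        simp only [Int.negSucc_eq]; omega
      rw [hk, dd]
      have hxE : xE x N (N-(n+1)) = x^((n+1).choose 2) := by
        rw [xE, if_neg (by omega)]; congr 2; omega
      rw [hxE]
      rw [norm_mul, norm_mul, norm_mul, norm_pow, norm_pow, norm_neg, norm_one, one_pow, one_mul]
      have hqb : ‖qb x (2*N) (N-(n+1))‖ ≤ Cqb ‖x‖ := qb_norm_le hx (2*N) (N-(n+1)) (by omega)
      have hc : ‖((Int.negSucc n : ℤ) : ℂ)‖ = (n:ℝ)+1 := by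
        rw [show Int.negSucc n = -((n+1 : ℕ) : ℤ) from rfl]
        push_cast
        rw [norm_neg]
        rw [show ((n:ℂ)+1) = (((n:ℝ)+1 : ℝ) : ℂ) from by push_cast; ring]
        rw [Complex.norm_real, Real.norm_of_nonneg (by positivity)]
      rw [hc]
      calc ‖qb x (2*N) (N-(n+1))‖ * ‖x‖^((n+1).choose 2) * ((n:ℝ)+1)
          ≤ Cqb ‖x‖ * ‖x‖^((n+1).choose 2) * ((n:ℝ)+1) := by
            apply mul_le_mul_of_nonneg_right (mul_le_mul_of_nonneg_right hqb (by positivity))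
              (by positivity)
        _ = Cqb ‖x‖ * (((n:ℝ)+1) * ‖x‖^((n+1).choose 2)) := by ring
    · rw [fN, if_neg h, norm_zero]
      positivity

lemma PP_eq_tsum (hx : ‖x‖ < 1) (hx0 : x ≠ 0) :
    Pinf x * Pinf x = ∑' j : ℤ, glim x j := by
  have hT : Tendsto (fun N => ∑' j : ℤ, fN x N j) atTop (𝓝 (∑' j : ℤ, glim x j)) :=
    tendsto_tsum_of_dominated_convergence (bnd_summable hx) (fN_tendsto hx hx0)
      (Eventually.of_forall (fun N j => fN_bound hx N j))
  have hAA : Tendsto (fun N => AA x N * AA x (N-1)) atTop (𝓝 (Pinf x * Pinf x)) :=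
    (AA_tendsto hx).mul ((AA_tendsto hx).comp (tendsto_sub_atTop_nat 1))
  have hEq : (fun N => AA x N * AA x (N-1)) =ᶠ[atTop] (fun N => ∑' j : ℤ, fN x N j) := by
    filter_upwards [eventually_ge_atTop 1] with N hN
    exact fN_sum hx hx0 hN
  exact tendsto_nhds_unique (hAA.congr' hEq) hT

lemma summable_fpos (hx : ‖x‖ < 1) : Summable (fpos x) := by
  apply Summable.of_norm_bounded (summable_nat_geom hx (‖(Pinf x)⁻¹‖))
  intro n
  rw [fpos, div_eq_mul_inv, norm_mul, norm_mul, norm_mul, norm_pow, norm_pow, norm_neg,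
    norm_one, one_pow, one_mul]
  have h1 : ‖x‖^((n+1).choose 2) ≤ ‖x‖^n := pow_choose_le hx n
  have h2 : ‖(n:ℂ)‖ = (n:ℝ) := by simp
  rw [h2]
  calc (n:ℝ) * ‖x‖^((n+1).choose 2) * ‖(Pinf x)⁻¹‖
      ≤ ((n:ℝ)+1) * ‖x‖^n * ‖(Pinf x)⁻¹‖ := by
        apply mul_le_mul_of_nonneg_right _ (norm_nonneg _)
        have := mul_le_mul_of_nonneg_left h1 (by positivity : (0:ℝ) ≤ (n:ℝ))
        nlinarith [pow_nonneg (norm_nonneg x) n]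
    _ = ‖(Pinf x)⁻¹‖ * (((n:ℝ)+1) * ‖x‖^n) := by ring

lemma summable_fneg (hx : ‖x‖ < 1) : Summable (fneg x) := by
  apply Summable.of_norm_bounded (summable_nat_geom hx (‖(Pinf x)⁻¹‖))
  intro n
  rw [fneg, div_eq_mul_inv, norm_mul, norm_mul, norm_mul, norm_pow, norm_pow, norm_neg,
    norm_one, one_pow, one_mul]
  have h1 : ‖x‖^((n+1).choose 2) ≤ ‖x‖^n := pow_choose_le hx n
  have h2 : ‖(n:ℂ)+1‖ = (n:ℝ)+1 := by
    rw [show ((n:ℂ)+1) = (((n:ℝ)+1 : ℝ) : ℂ) from by push_cast; ring]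
    rw [Complex.norm_real, Real.norm_of_nonneg (by positivity)]
  rw [h2]
  calc ((n:ℝ)+1) * ‖x‖^((n+1).choose 2) * ‖(Pinf x)⁻¹‖
      ≤ ((n:ℝ)+1) * ‖x‖^n * ‖(Pinf x)⁻¹‖ := by
        apply mul_le_mul_of_nonneg_right (mul_le_mul_of_nonneg_left h1 (by positivity))
          (norm_nonneg _)
    _ = ‖(Pinf x)⁻¹‖ * (((n:ℝ)+1) * ‖x‖^n) := by ring

theorem jacobi_cube (hx : ‖x‖ < 1) (hx0 : x ≠ 0) :
    (Pinf x)^3 = ∑' n : ℕ, ((-1)^n * (2*(n:ℂ)+1) * x^((n+1).choose 2)) := by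
  have hP := (multipliable_P hx).2
  have hfs := summable_fpos hx
  have hgs := summable_fneg hx
  have h1 := PP_eq_tsum hx hx0
  have h2 : ∑' j : ℤ, glim x j = (∑' n : ℕ, fpos x n) + ∑' n : ℕ, fneg x n := by
    have := (hfs.hasSum.int_rec hgs.hasSum).tsum_eq
    exact this
  have h3 : (∑' n : ℕ, fpos x n) + ∑' n : ℕ, fneg x n = ∑' n : ℕ, (fpos x n + fneg x n) :=
    (Summable.tsum_add hfs hgs).symm
  have h4 : ∑' n : ℕ, (fpos x n + fneg x n)
      = (∑' n : ℕ, ((-1)^n * (2*(n:ℂ)+1) * x^((n+1).choose 2))) / Pinf x := by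
    rw [← tsum_div_const]
    apply tsum_congr
    intro n
    rw [fpos, fneg, ← add_div]
    congr 1
    ring
  have h5 : Pinf x * Pinf x
      = (∑' n : ℕ, ((-1)^n * (2*(n:ℂ)+1) * x^((n+1).choose 2))) / Pinf x := by
    rw [h1, h2, h3, h4]
  field_simp at h5
  rw [← h5]

end JacLimit3

/-- The Kronecker symbol `(-2/n)`. -/
def kronNegTwo (n : ℕ) : ℤ :=
  if n % 8 = 1 ∨ n % 8 = 3 then 1
  else if n % 8 = 5 ∨ n % 8 = 7 then -1
  else 0

lemma kron_even (k : ℕ) : kronNegTwo (2*k) = 0 := by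
  rw [kronNegTwo]
  split_ifs with h1 h2
  · exfalso; omega
  · exfalso; omega
  · rfl

lemma kron_odd (k : ℕ) : kronNegTwo (2*k+1) = (-1:ℤ)^k * (-1)^((k+1).choose 2) := by
  obtain ⟨m, r, hr, rfl⟩ : ∃ m r, r < 4 ∧ k = 4*m + r := ⟨k/4, k%4, by omega, by omega⟩
  have h2c := two_mul_choose_two ((4*m+r)+1)
  simp only [Nat.add_sub_cancel] at h2c
  interval_cases r
  · -- r = 0 : c = 2*(4m²+m), sign +, kron 1
    have hc : (4*m+0+1).choose 2 = 2*(4*(m*m)+m) := by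
      refine Nat.eq_of_mul_eq_mul_left (by norm_num : 0 < 2) ?_
      rw [h2c]; ring
    have hk : (2*(4*m+0)+1) % 8 = 1 := by omega
    rw [kronNegTwo, if_pos (by omega), hc]
    have e1 : ((-1:ℤ))^(4*m+0) = 1 := by rw [pow_add, pow_mul]; norm_num
    have e2 : ((-1:ℤ))^(2*(4*(m*m)+m)) = 1 := by rw [pow_mul]; norm_num
    rw [e1, e2]; norm_num
  · have hc : (4*m+1+1).choose 2 = 2*(4*(m*m)+3*m) + 1 := by
      refine Nat.eq_of_mul_eq_mul_left (by norm_num : 0 < 2) ?_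
      rw [h2c]; ring
    have hk : (2*(4*m+1)+1) % 8 = 3 := by omega
    rw [kronNegTwo, if_pos (by omega), hc]
    have e1 : ((-1:ℤ))^(4*m+1) = -1 := by rw [pow_add, pow_mul]; norm_num
    have e2 : ((-1:ℤ))^(2*(4*(m*m)+3*m)+1) = -1 := by rw [pow_add, pow_mul]; norm_num
    rw [e1, e2]; norm_num
  · have hc : (4*m+2+1).choose 2 = 2*(4*(m*m)+5*m+1) + 1 := by
      refine Nat.eq_of_mul_eq_mul_left (by norm_num : 0 < 2) ?_
      rw [h2c]; ring
    have hk : (2*(4*m+2)+1) % 8 = 5 := by omega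
    rw [kronNegTwo, if_neg (by omega), if_pos (by omega), hc]
    have e1 : ((-1:ℤ))^(4*m+2) = 1 := by rw [pow_add, pow_mul]; norm_num
    have e2 : ((-1:ℤ))^(2*(4*(m*m)+5*m+1)+1) = -1 := by rw [pow_add, pow_mul]; norm_num
    rw [e1, e2]; norm_num
  · have hc : (4*m+3+1).choose 2 = 2*(4*(m*m)+7*m+3) := by
      refine Nat.eq_of_mul_eq_mul_left (by norm_num : 0 < 2) ?_
      rw [h2c]; ring
    have hk : (2*(4*m+3)+1) % 8 = 7 := by omega
    rw [kronNegTwo, if_neg (by omega), if_pos (by omega), hc]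
    have e1 : ((-1:ℤ))^(4*m+3) = -1 := by rw [pow_add, pow_mul]; norm_num
    have e2 : ((-1:ℤ))^(2*(4*(m*m)+7*m+3)) = 1 := by rw [pow_mul]; norm_num
    rw [e1, e2]; norm_num

section Final
variable {x : ℂ}

lemma summable_jac (hx : ‖x‖ < 1) :
    Summable (fun n : ℕ => ((-1:ℂ))^n * (2*(n:ℂ)+1) * x^((n+1).choose 2)) := by
  apply Summable.of_norm_bounded (summable_nat_geom hx 2)
  intro n
  rw [norm_mul, norm_mul, norm_pow, norm_pow, norm_neg, norm_one, one_pow, one_mul]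
  have h1 : ‖x‖^((n+1).choose 2) ≤ ‖x‖^n := pow_choose_le hx n
  have h2 : ‖2*(n:ℂ)+1‖ = 2*(n:ℝ)+1 := by
    rw [show (2*(n:ℂ)+1) = (((2*(n:ℝ)+1 : ℝ)) : ℂ) from by push_cast; ring]
    rw [Complex.norm_real, Real.norm_of_nonneg (by positivity)]
  rw [h2]
  have h3 : (0:ℝ) ≤ 2*(n:ℝ)+1 := by positivity
  calc (2*(n:ℝ)+1) * ‖x‖^((n+1).choose 2) ≤ (2*(n:ℝ)+1) * ‖x‖^n :=
        mul_le_mul_of_nonneg_left h1 h3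
    _ ≤ (2*((n:ℝ)+1)) * ‖x‖^n := by
        apply mul_le_mul_of_nonneg_right _ (pow_nonneg (norm_nonneg _) _)
        linarith
    _ = 2 * (((n:ℝ)+1) * ‖x‖^n) := by ring

lemma PGneg (hx : ‖x‖ < 1) (c d : ℕ) (hc : 1 ≤ c) (hd : 1 ≤ d) :
    Multipliable (fun n : ℕ => 1 - x^(c*n+d)) ∧ (∏' n : ℕ, (1 - x^(c*n+d))) ≠ 0 := by
  have key := multipliable_tprod_ne_zero (fun n => -(x^(c*n+d)))
    (fun n => by
      rw [norm_neg, norm_pow]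
      calc ‖x‖^(c*n+d) ≤ ‖x‖^1 := pow_le_pow_of_le_one (norm_nonneg _) hx.le (by omega)
        _ < 1 := by simpa using hx)
    (by
      apply Summable.of_norm_bounded (summable_geometric_of_lt_one (norm_nonneg x) hx)
      intro n
      rw [norm_neg, norm_pow]
      have hle : n ≤ c*n+d := le_trans (Nat.le_mul_of_pos_left n (by omega : 0 < c))
        (Nat.le_add_right _ _)
      exact pow_le_pow_of_le_one (norm_nonneg _) hx.le hle)
  have he : (fun n : ℕ => 1 + -(x^(c*n+d))) = (fun n => 1 - x^(c*n+d)) :=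
    funext (fun n => by ring)
  rw [he] at key
  exact key

lemma PGpos (hx : ‖x‖ < 1) (c d : ℕ) (hc : 1 ≤ c) (hd : 1 ≤ d) :
    Multipliable (fun n : ℕ => 1 + x^(c*n+d)) ∧ (∏' n : ℕ, (1 + x^(c*n+d))) ≠ 0 := by
  apply multipliable_tprod_ne_zero (fun n => x^(c*n+d))
  · intro n
    rw [norm_pow]
    calc ‖x‖^(c*n+d) ≤ ‖x‖^1 := pow_le_pow_of_le_one (norm_nonneg _) hx.le (by omega)
      _ < 1 := by simpa using hx
  · apply Summable.of_norm_bounded (summable_geometric_of_lt_one (norm_nonneg x) hx)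
    intro n
    rw [norm_pow]
    have hle : n ≤ c*n+d := le_trans (Nat.le_mul_of_pos_left n (by omega : 0 < c))
      (Nat.le_add_right _ _)
    exact pow_le_pow_of_le_one (norm_nonneg _) hx.le hle
end Final

section ProdChain
variable {u : ℂ}

lemma key_product (hu : ‖u‖ < 1) :
    (∏' n : ℕ, (1 - u^(2*n+2)))^3
      = (∏' n : ℕ, (1 - u^(n+1))) * (∏' n : ℕ, (1 - u^(4*n+4)))
        * (∏' n : ℕ, (1 - (-u)^(n+1))) := by
  have hnu : ‖-u‖ < 1 := by rwa [norm_neg]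
  obtain ⟨M1, N1⟩ := PGneg hu 2 1 (by omega) (by omega)  -- D = ∏ (1 - u^{2n+1})
  obtain ⟨M2, N2⟩ := PGneg hu 2 2 (by omega) (by omega)  -- B
  obtain ⟨M3, N3⟩ := PGpos hu 2 1 (by omega) (by omega)  -- F
  obtain ⟨M4, N4⟩ := PGpos hu 2 2 (by omega) (by omega)  -- G
  have MA : Multipliable (fun n : ℕ => 1 - u^(n+1)) :=
    ((PGneg hu 1 1 (by omega) (by omega)).1).congr (fun n => by rw [one_mul])
  have ME : Multipliable (fun n : ℕ => 1 + u^(n+1)) :=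
    ((PGpos hu 1 1 (by omega) (by omega)).1).congr (fun n => by rw [one_mul])
  -- (i) split of A
  have hA : (∏' n : ℕ, (1 - u^(n+1)))
      = (∏' n : ℕ, (1 - u^(2*n+1))) * ∏' n : ℕ, (1 - u^(2*n+2)) := by
    exact (tprod_even_mul_odd (f := fun n => 1 - u^(n+1)) M1 M2).symm
  -- (ii) split of E
  have hE : (∏' n : ℕ, (1 + u^(n+1)))
      = (∏' n : ℕ, (1 + u^(2*n+1))) * ∏' n : ℕ, (1 + u^(2*n+2)) := by
    exact (tprod_even_mul_odd (f := fun n => 1 + u^(n+1)) M3 M4).symm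
  -- (iii) B = A * E
  have hB : (∏' n : ℕ, (1 - u^(2*n+2)))
      = (∏' n : ℕ, (1 - u^(n+1))) * ∏' n : ℕ, (1 + u^(n+1)) := by
    rw [← Multipliable.tprod_mul MA ME]
    apply tprod_congr
    intro n
    have hpow : u^(n+1) * u^(n+1) = u^(2*n+2) := by rw [← pow_add]; congr 1; ring
    have expand : (1 - u^(n+1)) * (1 + u^(n+1)) = 1 - u^(n+1) * u^(n+1) := by ring
    rw [expand, hpow]
  -- (iv) C = B * G
  have hC : (∏' n : ℕ, (1 - u^(4*n+4)))
      = (∏' n : ℕ, (1 - u^(2*n+2))) * ∏' n : ℕ, (1 + u^(2*n+2)) := by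
    rw [← Multipliable.tprod_mul M2 M4]
    apply tprod_congr
    intro n
    have hpow : u^(2*n+2) * u^(2*n+2) = u^(4*n+4) := by rw [← pow_add]; congr 1; ring
    have expand : (1 - u^(2*n+2)) * (1 + u^(2*n+2)) = 1 - u^(2*n+2) * u^(2*n+2) := by ring
    rw [expand, hpow]
  -- (v) Euler : D * E = 1
  have hDE : (∏' n : ℕ, (1 - u^(2*n+1))) * (∏' n : ℕ, (1 + u^(n+1))) = 1 := by
    have h1 : (∏' n : ℕ, (1 - u^(2*n+2)))
        = (∏' n : ℕ, (1 - u^(2*n+2)))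
          * ((∏' n : ℕ, (1 - u^(2*n+1))) * (∏' n : ℕ, (1 + u^(n+1)))) := by
      conv_lhs => rw [hB, hA]
      ring
    apply mul_left_cancel₀ N2
    rw [← h1, mul_one]
  -- (vi) Pm = F * B
  have hPm : (∏' n : ℕ, (1 - (-u)^(n+1)))
      = (∏' n : ℕ, (1 + u^(2*n+1))) * ∏' n : ℕ, (1 - u^(2*n+2)) := by
    have he : ∀ k : ℕ, 1 + u^(2*k+1) = 1 - (-u)^(2*k+1) := by
      intro k
      rw [Odd.neg_pow ⟨k, by ring⟩]
      ring
    have ho : ∀ k : ℕ, 1 - u^(2*k+2) = 1 - (-u)^(2*k+2) := by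
      intro k
      rw [Even.neg_pow ⟨k+1, by ring⟩]
    have hsplit := tprod_even_mul_odd (f := fun n => 1 - (-u)^(n+1))
      (M3.congr he) (M2.congr ho)
    rw [← hsplit]
    congr 1
    · exact tprod_congr (fun k => (he k).symm)
    · exact tprod_congr (fun k => (ho k).symm)
  -- assemble
  rw [hA, hC, hPm]
  have rearr : ((∏' n : ℕ, (1 - u^(2*n+1))) * ∏' n : ℕ, (1 - u^(2*n+2)))
      * ((∏' n : ℕ, (1 - u^(2*n+2))) * ∏' n : ℕ, (1 + u^(2*n+2)))
      * ((∏' n : ℕ, (1 + u^(2*n+1))) * ∏' n : ℕ, (1 - u^(2*n+2)))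
      = (∏' n : ℕ, (1 - u^(2*n+2)))^3
        * ((∏' n : ℕ, (1 - u^(2*n+1)))
          * ((∏' n : ℕ, (1 + u^(2*n+1))) * ∏' n : ℕ, (1 + u^(2*n+2)))) := by
    ring
  rw [rearr, ← hE, hDE, mul_one]
end ProdChain

/-- The Dedekind eta function `η(τ) = q^{1/24} ∏ (1 - q^n)`, `q = exp(2πiτ)`. -/
noncomputable def dedekindEta (τ : ℂ) : ℂ :=
  Complex.exp (2 * Real.pi * I * τ / 24) *
    ∏' n : ℕ, (1 - Complex.exp (2 * Real.pi * I * τ) ^ (n + 1))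

theorem eta_quotient_theta_series (τ : ℂ) (hτ : 0 < τ.im) :
    dedekindEta (2*τ) ^ 9 / (dedekindEta τ ^ 3 * dedekindEta (4*τ) ^ 3) =
      ∑' n : ℕ, (kronNegTwo n : ℂ) * (n : ℂ) *
        Complex.exp (2 * Real.pi * I * (n : ℂ)^2 * τ / 8) := by
  set F : ℕ → ℂ := fun n => (kronNegTwo n : ℂ) * (n : ℂ) *
    Complex.exp (2 * Real.pi * I * (n : ℂ)^2 * τ / 8) with hF
  set u : ℂ := Complex.exp (2 * Real.pi * I * τ) with hu_def
  have hre : (2 * (Real.pi:ℂ) * I * τ).re = -(2 * Real.pi * τ.im) := by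
    have harg : (2 * (Real.pi:ℂ) * I * τ) = ((2*Real.pi : ℝ):ℂ) * (I * τ) := by
      push_cast; ring
    rw [harg]
    rw [Complex.re_ofReal_mul]
    have : (I * τ).re = -τ.im := by
      rw [Complex.mul_re, Complex.I_re, Complex.I_im]
      ring
    rw [this]
    ring
  have hu : ‖u‖ < 1 := by
    rw [hu_def, Complex.norm_exp, hre]
    rw [show (1:ℝ) = Real.exp 0 from Real.exp_zero.symm]
    apply Real.exp_lt_exp.mpr
    nlinarith [Real.pi_pos, hτ]
  have hu0 : u ≠ 0 := Complex.exp_ne_zero _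
  have hnu : ‖-u‖ < 1 := by rwa [norm_neg]
  have hnu0 : -u ≠ 0 := neg_ne_zero.mpr hu0
  have h2 : Complex.exp (2 * Real.pi * I * (2*τ)) = u^2 := by
    rw [hu_def, ← Complex.exp_nat_mul]
    congr 1
    push_cast
    ring
  have h4 : Complex.exp (2 * Real.pi * I * (4*τ)) = u^4 := by
    rw [hu_def, ← Complex.exp_nat_mul]
    congr 1
    push_cast
    ring
  -- RHS computation
  have hFeven : ∀ k : ℕ, F (2*k) = 0 := by
    intro k
    simp only [hF, kron_even, Int.cast_zero, zero_mul]
  have hodd : ∀ k : ℕ, F (2*k+1) = Complex.exp (2 * Real.pi * I * τ / 8)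
      * ((-1:ℂ)^k * (2*(k:ℂ)+1) * (-u)^((k+1).choose 2)) := by
    intro k
    simp only [hF]
    have hkr : ((kronNegTwo (2*k+1) : ℤ) : ℂ) = (-1:ℂ)^k * (-1)^((k+1).choose 2) := by
      rw [kron_odd]
      push_cast
      ring
    have hcc : (((k+1).choose 2 : ℕ) : ℂ) * 8 = (2*(k:ℂ)+1)^2 - 1 := by
      have h := two_mul_choose_two (k+1)
      simp only [Nat.add_sub_cancel] at h
      have h2' : ((2 * (k+1).choose 2 : ℕ) : ℂ) = (((k+1) * k : ℕ) : ℂ) := by rw [h]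
      push_cast at h2'
      linear_combination 4 * h2'
    have hexp : Complex.exp (2 * Real.pi * I * ((2*k+1 : ℕ):ℂ)^2 * τ / 8)
        = Complex.exp (2 * Real.pi * I * τ / 8) * u^((k+1).choose 2) := by
      rw [hu_def, ← Complex.exp_nat_mul, ← Complex.exp_add]
      congr 1
      push_cast
      linear_combination (-(2 * (Real.pi:ℂ) * I * τ) / 8) * hcc
    rw [hexp, hkr]
    have hneg : (-u)^((k+1).choose 2) = (-1:ℂ)^((k+1).choose 2) * u^((k+1).choose 2) := by
      rw [neg_pow]
    rw [hneg]
    push_cast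
    ring
  have hSodd : Summable (fun k => F (2*k+1)) := by
    apply Summable.congr _ (fun k => (hodd k).symm)
    exact (summable_jac hnu).mul_left _
  have hSeven : Summable (fun k => F (2*k)) :=
    summable_zero.congr (fun k => (hFeven k).symm)
  have hRHS : (∑' n : ℕ, F n)
      = Complex.exp (2 * Real.pi * I * τ / 8) * (∏' n : ℕ, (1 - (-u)^(n+1)))^3 := by
    rw [← tsum_even_add_odd hSeven hSodd]
    have h0 : (∑' k : ℕ, F (2*k)) = 0 := by
      rw [tsum_congr hFeven, tsum_zero]
    rw [h0, zero_add, tsum_congr hodd, tsum_mul_left]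
    congr 1
    have hjac := jacobi_cube (x := -u) hnu hnu0
    rw [Pinf] at hjac
    exact hjac.symm
  -- LHS computation
  simp only [dedekindEta]
  simp only [h2, h4]
  have hBconv : (∏' n : ℕ, (1 - (u^2)^(n+1))) = ∏' n : ℕ, (1 - u^(2*n+2)) :=
    tprod_congr (fun n => by rw [← pow_mul, show 2*(n+1) = 2*n+2 from by ring])
  have hCconv : (∏' n : ℕ, (1 - (u^4)^(n+1))) = ∏' n : ℕ, (1 - u^(4*n+4)) :=
    tprod_congr (fun n => by rw [← pow_mul, show 4*(n+1) = 4*n+4 from by ring])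
  rw [hBconv, hCconv, hRHS]
  -- nonvanishing
  have NA : (∏' n : ℕ, (1 - u^(n+1))) ≠ 0 := by
    have h := (PGneg hu 1 1 (by omega) (by omega)).2
    have he : (∏' n : ℕ, (1 - u^(1*n+1))) = ∏' n : ℕ, (1 - u^(n+1)) :=
      tprod_congr (fun n => by rw [one_mul])
    rwa [he] at h
  have NC : (∏' n : ℕ, (1 - u^(4*n+4))) ≠ 0 := (PGneg hu 4 4 (by omega) (by omega)).2
  have hE1 : Complex.exp (2 * Real.pi * I * τ / 24) ≠ 0 := Complex.exp_ne_zero _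
  have hE4 : Complex.exp (2 * Real.pi * I * (4*τ) / 24) ≠ 0 := Complex.exp_ne_zero _
  have hden : (Complex.exp (2 * Real.pi * I * τ / 24) * ∏' n : ℕ, (1 - u^(n+1))) ^ 3
      * (Complex.exp (2 * Real.pi * I * (4*τ) / 24) * ∏' n : ℕ, (1 - u^(4*n+4))) ^ 3 ≠ 0 := by
    apply mul_ne_zero <;> apply pow_ne_zero <;> apply mul_ne_zero <;> assumption
  rw [div_eq_iff hden]
  have hpre : Complex.exp (2 * Real.pi * I * (2*τ) / 24) ^ 9
      = Complex.exp (2 * Real.pi * I * τ / 8) * Complex.exp (2 * Real.pi * I * τ / 24) ^ 3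
        * Complex.exp (2 * Real.pi * I * (4*τ) / 24) ^ 3 := by
    rw [← Complex.exp_nat_mul, ← Complex.exp_nat_mul, ← Complex.exp_nat_mul,
      ← Complex.exp_add, ← Complex.exp_add]
    congr 1
    push_cast
    ring
  have hB3 := key_product hu
  calc (Complex.exp (2 * Real.pi * I * (2*τ) / 24) * ∏' n : ℕ, (1 - u^(2*n+2))) ^ 9
      = Complex.exp (2 * Real.pi * I * (2*τ) / 24) ^ 9
        * ((∏' n : ℕ, (1 - u^(2*n+2)))^3)^3 := by
        rw [mul_pow, ← pow_mul]
    _ = Complex.exp (2 * Real.pi * I * (2*τ) / 24) ^ 9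
        * ((∏' n : ℕ, (1 - u^(n+1))) * (∏' n : ℕ, (1 - u^(4*n+4)))
          * (∏' n : ℕ, (1 - (-u)^(n+1))))^3 := by rw [hB3]
    _ = Complex.exp (2 * Real.pi * I * τ / 8) * (∏' n : ℕ, (1 - (-u)^(n+1)))^3
        * ((Complex.exp (2 * Real.pi * I * τ / 24) * ∏' n : ℕ, (1 - u^(n+1))) ^ 3
          * (Complex.exp (2 * Real.pi * I * (4*τ) / 24) * ∏' n : ℕ, (1 - u^(4*n+4))) ^ 3) := by
        rw [hpre]
        ring
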